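/- Let {X_t} be the stationary two-state Markov chain with transition probabilities α (0→1) and β (1→0), α, β > 0, α+β ≤ 1. Then for any τ ≥ 1 and any events A in the σ-algebra generated by (X_0, ..., X_k) and B in the σ-algebra generated by (X_{k+τ}, X_{k+τ+1}, ...), |P(A ∩ B) − P(A)P(B)| ≤ (1 − α − β)^τ. Hence the α-mixing coefficient of the chain at lag τ is at most (1−α−β)^τ. -/

import Mathlib

open MeasureTheory ProbabilityTheory Set

namespace Stmt19Aux

set_option linter.unusedSectionVars false
set_option linter.unusedVariables false
set_option maxHeartbeats 1000000

variable {Ω : Type*} [MeasurableSpace Ω] (X : ℕ → Ω → ℕ)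
variable (hmeas : ∀ t, Measurable (X t)) (hval : ∀ t ω, X t ω ≤ 1)
variable (α β : ℝ) (μ : Measure Ω) [IsProbabilityMeasure μ]
variable (hα : 0 < α) (hβ : 0 < β) (hαβ : α + β ≤ 1)
variable (hmarkov : ∀ (t : ℕ) (x : ℕ → ℕ),
      μ {ω | ∀ i ≤ t, X i ω = x i} ≠ 0 →
      ProbabilityTheory.cond μ {ω | ∀ i ≤ t, X i ω = x i} {ω | X (t + 1) ω = 1}
        = if x t = 1 then ENNReal.ofReal (1 - β) else ENNReal.ofReal α)




/-- cylinder on coordinates 0..s -/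
def Cyl (s : ℕ) (x : ℕ → ℕ) : Set Ω := {ω | ∀ i ≤ s, X i ω = x i}

/-- future cylinder: coordinates s..s+m -/
def FCyl (s m : ℕ) (b : ℕ → ℕ) : Set Ω := {ω | ∀ i ≤ m, X (s + i) ω = b i}

/-- E depends only on coordinates ≤ s -/
def Sat (s : ℕ) (E : Set Ω) : Prop :=
  ∀ ω ω', (∀ i ≤ s, X i ω = X i ω') → (ω ∈ E ↔ ω' ∈ E)



include hmeas in
lemma meas_eq (t : ℕ) (c : ℕ) : MeasurableSet {ω | X t ω = c} :=
  hmeas t (measurableSet_singleton c)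

include hmeas in
lemma meas_cyl (s : ℕ) (x : ℕ → ℕ) : MeasurableSet (Cyl X s x) := by
  have : Cyl X s x = ⋂ i, ⋂ (_ : i ≤ s), {ω | X i ω = x i} := by
    ext ω; simp [Cyl]
  rw [this]
  exact MeasurableSet.iInter fun i => MeasurableSet.iInter fun _ => meas_eq X hmeas i (x i)

include hmeas in
lemma meas_fcyl (s m : ℕ) (b : ℕ → ℕ) : MeasurableSet (FCyl X s m b) := by
  have : FCyl X s m b = ⋂ i, ⋂ (_ : i ≤ m), {ω | X (s + i) ω = b i} := by
    ext ω; simp [FCyl]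
  rw [this]
  exact MeasurableSet.iInter fun i => MeasurableSet.iInter fun _ => meas_eq X hmeas _ (b i)

lemma sat_mono {k s : ℕ} (hks : k ≤ s) {E : Set Ω} (h : Sat X k E) : Sat X s E :=
  fun ω ω' hagree => h ω ω' fun i hi => hagree i (hi.trans hks)

lemma sat_inter {s : ℕ} {E F : Set Ω} (hE : Sat X s E) (hF : Sat X s F) :
    Sat X s (E ∩ F) := fun ω ω' h => by
  simp only [mem_inter_iff]; rw [hE ω ω' h, hF ω ω' h]

lemma sat_eq {s j : ℕ} (hj : j ≤ s) (c : ℕ) : Sat X s {ω | X j ω = c} :=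
  fun ω ω' h => by simp only [mem_setOf_eq, h j hj]

lemma sat_univ (s : ℕ) : Sat X s (univ : Set Ω) := fun _ _ _ => Iff.rfl

lemma sat_fcyl (s m : ℕ) (b : ℕ → ℕ) : Sat X (s + m) (FCyl X s m b) := by
  intro ω ω' h
  constructor <;> intro hm i hi
  · rw [← h (s + i) (by omega)]; exact hm i hi
  · rw [h (s + i) (by omega)]; exact hm i hi

/-- a saturated set intersected with a full cylinder is the cylinder or empty -/
lemma sat_cases {s : ℕ} {E : Set Ω} (hE : Sat X s E) (x : ℕ → ℕ) :
    E ∩ Cyl X s x = Cyl X s x ∨ E ∩ Cyl X s x = ∅ := by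
  by_cases h : (E ∩ Cyl X s x).Nonempty
  · left
    obtain ⟨ω₀, hω₀E, hω₀C⟩ := h
    refine subset_antisymm inter_subset_right fun ω hω => ⟨?_, hω⟩
    exact (hE ω₀ ω fun i hi => (hω₀C i hi).trans (hω i hi).symm).mp hω₀E
  · right; exact not_nonempty_iff_eq_empty.mp h





/-- extend a finite 0/1-valued vector to ℕ → ℕ -/
def ext' (s : ℕ) (v : Fin (s + 1) → Fin 2) : ℕ → ℕ :=
  fun i => if h : i < s + 1 then (v ⟨i, h⟩ : ℕ) else 0

include hmeas hval in
lemma part (s : ℕ) (F : Set Ω) (hF : MeasurableSet F) :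
    μ F = ∑ v : Fin (s + 1) → Fin 2, μ (F ∩ Cyl X s (ext' s v)) := by
  have hdis : Pairwise (Function.onFun Disjoint
      (fun v : Fin (s + 1) → Fin 2 => F ∩ Cyl X s (ext' s v))) := by
    intro v w hvw
    refine Set.disjoint_left.mpr fun ω ⟨_, hv⟩ ⟨_, hw⟩ => hvw ?_
    funext i
    have h1 := hv i.1 (Nat.lt_succ_iff.mp i.2)
    have h2 := hw i.1 (Nat.lt_succ_iff.mp i.2)
    simp only [ext', i.2, dif_pos] at h1 h2
    exact Fin.ext (by rw [← h1, ← h2])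
  have hcover : F = ⋃ v : Fin (s + 1) → Fin 2, F ∩ Cyl X s (ext' s v) := by
    refine subset_antisymm (fun ω hω => ?_) (iUnion_subset fun v => inter_subset_left)
    refine mem_iUnion.mpr ⟨fun i => ⟨X i.1 ω, Nat.lt_succ_of_le (hval i.1 ω)⟩, hω, ?_⟩
    intro i hi
    simp [ext', Nat.lt_succ_of_le hi]
  calc μ F = μ (⋃ v : Fin (s + 1) → Fin 2, F ∩ Cyl X s (ext' s v)) := by rw [← hcover]
    _ = ∑' v : Fin (s + 1) → Fin 2, μ (F ∩ Cyl X s (ext' s v)) :=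
        measure_iUnion hdis fun v => hF.inter (meas_cyl X hmeas s _)
    _ = ∑ v : Fin (s + 1) → Fin 2, μ (F ∩ Cyl X s (ext' s v)) := tsum_fintype _

/-- the σ-algebra of ambient-measurable sets saturated at level k -/
def satSpace (k : ℕ) : MeasurableSpace Ω where
  MeasurableSet' A := MeasurableSet A ∧ Sat X k A
  measurableSet_empty := ⟨MeasurableSet.empty, fun _ _ _ => Iff.rfl⟩
  measurableSet_compl := fun A ⟨hA, hs⟩ => ⟨hA.compl, fun ω ω' h => not_congr (hs ω ω' h)⟩
  measurableSet_iUnion := fun f hf =>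
    ⟨MeasurableSet.iUnion fun i => (hf i).1, fun ω ω' h => by
      simp only [mem_iUnion]; exact exists_congr fun i => (hf i).2 ω ω' h⟩

include hmeas in
lemma past_meas (k : ℕ) (A : Set Ω)
    (hA : MeasurableSet[⨆ i : Fin (k + 1), MeasurableSpace.comap (X i.1) inferInstance] A) :
    MeasurableSet A ∧ Sat X k A := by
  have hle : (⨆ i : Fin (k + 1), MeasurableSpace.comap (X i.1) inferInstance) ≤ satSpace X k := by
    refine iSup_le fun i => ?_
    rintro A ⟨S, -, rfl⟩
    exact ⟨hmeas i.1 (by trivial), fun ω ω' h => by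
      simp only [mem_preimage, h i.1 (Nat.lt_succ_iff.mp i.2)]⟩
  exact hle A hA

include hmeas in
lemma fut_le_ambient (s : ℕ) :
    (⨆ i : {i : ℕ // s ≤ i}, MeasurableSpace.comap (X i.1) inferInstance) ≤
      ‹MeasurableSpace Ω› := by
  refine iSup_le fun i => ?_
  rintro A ⟨S, -, rfl⟩
  exact hmeas i.1 (by trivial)





def extv (d : ℕ) (v : Fin (d + 1) → Fin 2) : ℕ → ℕ :=
  fun i => if h : i < d + 1 then (v ⟨i, h⟩ : ℕ) else 0

lemma extv_le (d : ℕ) (v : Fin (d + 1) → Fin 2) : ∀ i, extv d v i ≤ 1 := by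
  intro i; unfold extv; split
  · exact Nat.lt_succ_iff.mp (Fin.is_lt _)
  · exact Nat.zero_le 1

def Csets (s : ℕ) : Set (Set Ω) :=
  {T | ∃ m b, (∀ i, b i ≤ 1) ∧ T = FCyl X s m b}

include hval in
lemma fut_eq (s : ℕ) :
    (⨆ i : {i : ℕ // s ≤ i}, MeasurableSpace.comap (X i.1) inferInstance) =
      MeasurableSpace.generateFrom (Csets X s) := by
  apply le_antisymm
  · refine iSup_le fun i => ?_
    obtain ⟨i, hi⟩ := i
    obtain ⟨d, rfl⟩ : ∃ d, i = s + d := ⟨i - s, by omega⟩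
    rintro A ⟨S, -, rfl⟩
    have hA : X (s + d) ⁻¹' S =
        ⋃ v : Fin (d + 1) → Fin 2, ⋃ (_ : (v ⟨d, Nat.lt_succ_self d⟩ : ℕ) ∈ S),
          FCyl X s d (extv d v) := by
      ext ω
      simp only [mem_preimage, mem_iUnion]
      constructor
      · intro hS
        refine ⟨fun i => ⟨X (s + i.1) ω, Nat.lt_succ_of_le (hval _ ω)⟩, hS, fun i hi => ?_⟩
        simp [extv, Nat.lt_succ_of_le hi]
      · rintro ⟨v, hvS, hv⟩
        have := hv d le_rfl
        simp only [extv, Nat.lt_succ_self, dif_pos] at this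
        rwa [this]
    rw [hA]
    refine MeasurableSet.iUnion fun v => MeasurableSet.iUnion fun hvS => ?_
    exact MeasurableSpace.measurableSet_generateFrom ⟨d, extv d v, extv_le d v, rfl⟩
  · refine MeasurableSpace.generateFrom_le ?_
    rintro T ⟨m, b, hb, rfl⟩
    have : FCyl X s m b = ⋂ i, ⋂ (_ : i ≤ m), {ω | X (s + i) ω = b i} := by
      ext ω; simp [FCyl]
    rw [this]
    refine MeasurableSet.iInter fun i => MeasurableSet.iInter fun _ => ?_
    exact le_iSup (fun j : {i : ℕ // s ≤ i} =>
        MeasurableSpace.comap (X j.1) inferInstance) ⟨s + i, Nat.le_add_right s i⟩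
      _ ⟨{b i}, trivial, rfl⟩

lemma isPiSystem_csets (s : ℕ) : IsPiSystem (Csets X s) := by
  rintro T1 ⟨m1, b1, hb1, rfl⟩ T2 ⟨m2, b2, hb2, rfl⟩ hne
  obtain ⟨ω, h1, h2⟩ := hne
  rcases le_total m1 m2 with h12 | h21
  · refine ⟨m2, b2, hb2, ?_⟩
    refine subset_antisymm inter_subset_right fun ω' hω' => ⟨fun i hi => ?_, hω'⟩
    rw [hω' i (hi.trans h12), ← h2 i (hi.trans h12), h1 i hi]
  · refine ⟨m1, b1, hb1, ?_⟩
    refine subset_antisymm inter_subset_left fun ω' hω' => ⟨hω', fun i hi => ?_⟩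
    rw [hω' i (hi.trans h21), ← h1 i (hi.trans h21), h2 i hi]




include hmeas hmarkov in
lemma step_cyl (t : ℕ) (x : ℕ → ℕ) :
    μ (Cyl X t x ∩ {ω | X (t + 1) ω = 1})
      = μ (Cyl X t x) * (if x t = 1 then ENNReal.ofReal (1 - β) else ENNReal.ofReal α) := by
  have hC : Cyl X t x = {ω | ∀ i ≤ t, X i ω = x i} := rfl
  rw [hC]
  set C := {ω | ∀ i ≤ t, X i ω = x i} with hCdef
  set T := {ω | X (t + 1) ω = 1} with hTdef
  by_cases h : μ C = 0
  · have h1 : μ (C ∩ T) = 0 := le_antisymm (h ▸ measure_mono inter_subset_left) (zero_le)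
    rw [h1, h, zero_mul]
  · have hm := hmarkov t x h
    have hmc : MeasurableSet C := hC ▸ meas_cyl X hmeas t x
    rw [cond_apply hmc μ T] at hm
    have hfin : μ C ≠ ⊤ := measure_ne_top μ _
    calc μ (C ∩ T) = (μ C * (μ C)⁻¹) * μ (C ∩ T) := by
          rw [ENNReal.mul_inv_cancel h hfin, one_mul]
      _ = μ C * ((μ C)⁻¹ * μ (C ∩ T)) := by rw [mul_assoc]
      _ = _ := by rw [hm]

include hmeas hval in
lemma split (s : ℕ) (E : Set Ω) (hE : MeasurableSet E) :
    μ (E ∩ {ω | X s ω = 1}) + μ (E ∩ {ω | X s ω = 0}) = μ E := by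
  rw [← measure_union _ (hE.inter (meas_eq X hmeas s 0))]
  · congr 1
    ext ω
    simp only [mem_union, mem_inter_iff, mem_setOf_eq]
    constructor
    · rintro (⟨h, -⟩ | ⟨h, -⟩) <;> exact h
    · intro h
      have h1 := hval s ω
      have h2 : X s ω = 0 ∨ X s ω = 1 := by omega
      rcases h2 with h2 | h2
      · exact Or.inr ⟨h, h2⟩
      · exact Or.inl ⟨h, h2⟩
  · refine Set.disjoint_left.mpr fun ω ha hb => ?_
    obtain ⟨-, h1⟩ := ha
    obtain ⟨-, h0⟩ := hb
    simp only [mem_setOf_eq] at h1 h0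
    omega

include hmeas hval hmarkov in
lemma step (s : ℕ) (E : Set Ω) (hE : MeasurableSet E) (hsat : Sat X s E) :
    μ (E ∩ {ω | X (s + 1) ω = 1})
      = ENNReal.ofReal (1 - β) * μ (E ∩ {ω | X s ω = 1})
        + ENNReal.ofReal α * μ (E ∩ {ω | X s ω = 0}) := by
  have hlt : s < s + 1 := Nat.lt_succ_self s
  set T := {ω | X (s + 1) ω = 1} with hT
  have key : ∀ (c : ℕ) (v : Fin (s + 1) → Fin 2),
      (E ∩ {ω | X s ω = c}) ∩ Cyl X s (ext' s v)
        = if (v ⟨s, hlt⟩ : ℕ) = c then E ∩ Cyl X s (ext' s v) else ∅ := by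
    intro c v
    have hsub : Cyl X s (ext' s v) ⊆ {ω | X s ω = (v ⟨s, hlt⟩ : ℕ)} := by
      intro ω hω
      have := hω s le_rfl
      simpa [ext', hlt] using this
    split_ifs with hc
    · ext ω
      simp only [mem_inter_iff, mem_setOf_eq]
      exact ⟨fun ⟨⟨h1, _⟩, h3⟩ => ⟨h1, h3⟩, fun ⟨h1, h3⟩ => ⟨⟨h1, hc ▸ hsub h3⟩, h3⟩⟩
    · ext ω
      simp only [mem_inter_iff, mem_setOf_eq, mem_empty_iff_false, iff_false, not_and]
      rintro ⟨-, h2⟩ h3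
      exact hc ((hsub h3).symm.trans h2)
  have key1 : ∀ v : Fin (s + 1) → Fin 2,
      μ ((E ∩ T) ∩ Cyl X s (ext' s v))
        = (if (v ⟨s, hlt⟩ : ℕ) = 1 then ENNReal.ofReal (1 - β) else ENNReal.ofReal α)
            * μ (E ∩ Cyl X s (ext' s v)) := by
    intro v
    have hcomm : (E ∩ T) ∩ Cyl X s (ext' s v) = (E ∩ Cyl X s (ext' s v)) ∩ T := by
      rw [inter_right_comm]
    rw [hcomm]
    rcases sat_cases X hsat (ext' s v) with hcase | hcase
    · rw [hcase, step_cyl X hmeas α β μ hmarkov s (ext' s v), ← hcase]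
      have : ext' s v s = (v ⟨s, hlt⟩ : ℕ) := by simp [ext', hlt]
      rw [this, mul_comm]
    · rw [hcase]; simp
  rw [part X hmeas hval μ s (E ∩ T) (hE.inter (meas_eq X hmeas (s + 1) 1)),
      part X hmeas hval μ s (E ∩ {ω | X s ω = 1}) (hE.inter (meas_eq X hmeas s 1)),
      part X hmeas hval μ s (E ∩ {ω | X s ω = 0}) (hE.inter (meas_eq X hmeas s 0)),
      Finset.mul_sum, Finset.mul_sum, ← Finset.sum_add_distrib]
  refine Finset.sum_congr rfl fun v _ => ?_
  rw [key1 v, key 1 v, key 0 v]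
  have hv : (v ⟨s, hlt⟩ : ℕ) = 0 ∨ (v ⟨s, hlt⟩ : ℕ) = 1 := by
    have := (v ⟨s, hlt⟩).isLt; omega
  rcases hv with hv | hv <;> simp [hv]



/-- real one-step transition probability from state a to state c -/
noncomputable def qr (a c : ℕ) : ℝ :=
  if c = 1 then (if a = 1 then 1 - β else α) else (if a = 1 then β else 1 - α)

noncomputable def qe (a c : ℕ) : ENNReal := ENNReal.ofReal (qr α β a c)

include hα hβ hαβ in
lemma qr_nonneg (a c : ℕ) : 0 ≤ qr α β a c := by
  unfold qr; split_ifs <;> linarith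

include hα hβ hαβ in
lemma qr_le_one (a c : ℕ) : qr α β a c ≤ 1 := by
  unfold qr; split_ifs <;> linarith

lemma qr_compl (a : ℕ) (ha : a ≤ 1) : qr α β a 0 = 1 - qr α β a 1 := by
  rcases Nat.le_one_iff_eq_zero_or_eq_one.mp ha with rfl | rfl <;> simp [qr]

include hmeas hval hα hβ hαβ hmarkov in
/-- real-valued step -/
lemma stepR (s : ℕ) (E : Set Ω) (hE : MeasurableSet E) (hsat : Sat X s E) :
    (μ (E ∩ {ω | X (s + 1) ω = 1})).toReal
      = (1 - β) * (μ (E ∩ {ω | X s ω = 1})).toReal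
        + α * (μ (E ∩ {ω | X s ω = 0})).toReal := by
  rw [step X hmeas hval α β μ hmarkov s E hE hsat]
  rw [ENNReal.toReal_add (by finiteness) (by finiteness), ENNReal.toReal_mul,
    ENNReal.toReal_mul, ENNReal.toReal_ofReal (by linarith), ENNReal.toReal_ofReal hα.le]

include hmeas hval in
lemma splitR (s : ℕ) (E : Set Ω) (hE : MeasurableSet E) :
    (μ (E ∩ {ω | X s ω = 1})).toReal + (μ (E ∩ {ω | X s ω = 0})).toReal = (μ E).toReal := by
  rw [← ENNReal.toReal_add (by finiteness) (by finiteness), split X hmeas hval μ s E hE]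

include hmeas hval hα hβ hαβ hmarkov in
/-- geometric contraction of the conditional one-probability -/
lemma multi (k : ℕ) (E : Set Ω) (hE : MeasurableSet E) (hsat : Sat X k E) :
    ∀ n : ℕ, (μ (E ∩ {ω | X (k + n) ω = 1})).toReal - α / (α + β) * (μ E).toReal
      = (1 - α - β) ^ n
          * ((μ (E ∩ {ω | X k ω = 1})).toReal - α / (α + β) * (μ E).toReal) := by
  intro n
  induction n with
  | zero => simp
  | succ n ih =>
    have hab : α + β ≠ 0 := by positivity
    have hsat' : Sat X (k + n) E := sat_mono X (Nat.le_add_right k n) hsat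
    have hstep := stepR X hmeas hval α β μ hα hβ hαβ hmarkov (k + n) E hE hsat'
    have hsplit := splitR X hmeas hval μ (k + n) E hE
    have hkn : k + (n + 1) = (k + n) + 1 := rfl
    set u := (μ (E ∩ {ω | X (k + n) ω = 1})).toReal with hu
    set v := (μ (E ∩ {ω | X (k + n) ω = 0})).toReal with hvv
    set e := (μ E).toReal with he
    have hv : v = e - u := by linarith
    have key : (1 - β) * u + α * v - α / (α + β) * e
        = (1 - α - β) * (u - α / (α + β) * e) := by
      rw [hv]; field_simp; ring
    rw [hkn, hstep, key, ih, pow_succ]; ring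




include hmeas hval hα hβ hαβ hmarkov in
lemma stepc (s : ℕ) (a c : ℕ) (ha : a ≤ 1) (hc : c ≤ 1) (E : Set Ω)
    (hE : MeasurableSet E) (hsat : Sat X s E) (hsub : E ⊆ {ω | X s ω = a}) :
    μ (E ∩ {ω | X (s + 1) ω = c}) = qe α β a c * μ E := by
  have hEa1 : E ∩ {ω | X s ω = 1} = if a = 1 then E else ∅ := by
    split_ifs with h
    · exact inter_eq_self_of_subset_left (h ▸ hsub)
    · ext ω; simp only [mem_inter_iff, mem_setOf_eq, mem_empty_iff_false, iff_false, not_and]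
      intro hω h1; exact h ((hsub hω).symm.trans h1)
  have hEa0 : E ∩ {ω | X s ω = 0} = if a = 0 then E else ∅ := by
    split_ifs with h
    · exact inter_eq_self_of_subset_left (h ▸ hsub)
    · ext ω; simp only [mem_inter_iff, mem_setOf_eq, mem_empty_iff_false, iff_false, not_and]
      intro hω h1; exact h ((hsub hω).symm.trans h1)
  have h1 : μ (E ∩ {ω | X (s + 1) ω = 1}) = qe α β a 1 * μ E := by
    rw [step X hmeas hval α β μ hmarkov s E hE hsat, hEa1, hEa0]
    rcases Nat.le_one_iff_eq_zero_or_eq_one.mp ha with rfl | rfl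
    · simp [qe, qr]
    · simp [qe, qr]
  rcases Nat.le_one_iff_eq_zero_or_eq_one.mp hc with rfl | rfl
  · -- c = 0 : complement
    have hsp := split X hmeas hval μ (s + 1) E hE
    have h0 : μ (E ∩ {ω | X (s + 1) ω = 0}) = μ E - qe α β a 1 * μ E := by
      rw [← h1]
      exact ENNReal.eq_sub_of_add_eq (measure_ne_top μ _) (by rw [add_comm]; exact hsp)
    rw [h0]
    have hq1 : qr α β a 1 ≤ 1 := qr_le_one α β hα hβ hαβ a 1
    have hq0 : 0 ≤ qr α β a 1 := qr_nonneg α β hα hβ hαβ a 1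
    have : qe α β a 0 = 1 - qe α β a 1 := by
      unfold qe
      rw [qr_compl α β a ha, ENNReal.ofReal_sub _ hq0, ENNReal.ofReal_one]
    rw [this, ENNReal.sub_mul (fun _ _ => measure_ne_top μ _), one_mul]
  · exact h1

include hmeas hval hα hβ hαβ hmarkov in
lemma chain (s : ℕ) (b : ℕ → ℕ) (hb : ∀ i, b i ≤ 1) :
    ∀ (m : ℕ) (E : Set Ω), MeasurableSet E → Sat X s E → E ⊆ {ω | X s ω = b 0} →
      μ (E ∩ FCyl X s m b) = μ E * ∏ i ∈ Finset.range m, qe α β (b i) (b (i + 1)) := by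
  intro m
  induction m with
  | zero =>
    intro E hE hsat hsub
    have : FCyl X s 0 b = {ω | X s ω = b 0} := by
      ext ω; simp only [FCyl, mem_setOf_eq]
      constructor
      · intro h; have := h 0 le_rfl; simpa using this
      · intro h i hi; interval_cases i; simpa using h
    rw [this, inter_eq_self_of_subset_left hsub]
    simp
  | succ m ih =>
    intro E hE hsat hsub
    have hdecomp : FCyl X s (m + 1) b = FCyl X s m b ∩ {ω | X (s + m + 1) ω = b (m + 1)} := by
      ext ω
      simp only [FCyl, mem_inter_iff, mem_setOf_eq]
      constructor
      · intro h
        exact ⟨fun i hi => h i (hi.trans (Nat.le_succ m)), by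
          have := h (m + 1) le_rfl
          rwa [show s + (m + 1) = s + m + 1 from rfl] at this⟩
      · rintro ⟨h1, h2⟩ i hi
        rcases Nat.lt_succ_iff_lt_or_eq.mp (Nat.lt_succ_of_le hi) with h | rfl
        · exact h1 i (Nat.lt_succ_iff.mp h)
        · exact h2
    set E' := E ∩ FCyl X s m b with hE'
    have hmE' : MeasurableSet E' := hE.inter (meas_fcyl X hmeas s m b)
    have hsatE' : Sat X (s + m) E' :=
      sat_inter X (sat_mono X (Nat.le_add_right s m) hsat) (sat_fcyl X s m b)
    have hsubE' : E' ⊆ {ω | X (s + m) ω = b m} := fun ω hω => hω.2 m le_rfl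
    have hstep := stepc X hmeas hval α β μ hα hβ hαβ hmarkov (s + m) (b m) (b (m + 1))
      (hb m) (hb (m + 1)) E' hmE' hsatE' hsubE'
    calc μ (E ∩ FCyl X s (m + 1) b)
        = μ (E' ∩ {ω | X (s + m + 1) ω = b (m + 1)}) := by rw [hdecomp, inter_assoc]
      _ = qe α β (b m) (b (m + 1)) * μ E' := hstep
      _ = qe α β (b m) (b (m + 1)) * (μ E * ∏ i ∈ Finset.range m, qe α β (b i) (b (i + 1))) := by
          rw [ih E hE hsat hsub]
      _ = μ E * ∏ i ∈ Finset.range (m + 1), qe α β (b i) (b (i + 1)) := by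
          rw [Finset.prod_range_succ]; ring

include hmeas hval hα hβ hαβ hmarkov in
lemma ci (s : ℕ) (bb : ℕ) (hbb : bb ≤ 1) (E : Set Ω) (hE : MeasurableSet E)
    (hsat : Sat X s E) (hsub : E ⊆ {ω | X s ω = bb}) :
    ∀ B : Set Ω,
      MeasurableSet[⨆ i : {i : ℕ // s ≤ i}, MeasurableSpace.comap (X i.1) inferInstance] B →
      μ (E ∩ B) * μ {ω | X s ω = bb} = μ E * μ ({ω | X s ω = bb} ∩ B) := by
  set Sb := {ω | X s ω = bb} with hSb
  have hmSb : MeasurableSet Sb := meas_eq X hmeas s bb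
  have hsatSb : Sat X s Sb := sat_eq X le_rfl bb
  intro B hB
  refine MeasurableSpace.induction_on_inter (m := ⨆ i : {i : ℕ // s ≤ i},
      MeasurableSpace.comap (X i.1) inferInstance)
    (C := fun B _ => μ (E ∩ B) * μ Sb = μ E * μ (Sb ∩ B))
    (fut_eq X hval s) (isPiSystem_csets X s) (by simp) ?_ ?_ ?_ B hB
  · -- basic: future cylinders
    rintro T ⟨m, b, hb, rfl⟩
    by_cases hb0 : b 0 = bb
    · have hsub' : E ⊆ {ω | X s ω = b 0} := hb0 ▸ hsub
      have hsubSb : Sb ⊆ {ω | X s ω = b 0} := by rw [hSb, hb0]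
      rw [chain X hmeas hval α β μ hα hβ hαβ hmarkov s b hb m E hE hsat hsub',
        chain X hmeas hval α β μ hα hβ hαβ hmarkov s b hb m Sb hmSb hsatSb hsubSb]
      ring
    · have hST : Sb ∩ FCyl X s m b = ∅ := by
        ext ω
        simp only [mem_inter_iff, mem_setOf_eq, mem_empty_iff_false, iff_false, not_and]
        intro hω hF
        have h0 : X (s + 0) ω = b 0 := hF 0 (Nat.zero_le m)
        exact hb0 (h0.symm.trans hω)
      have hET : E ∩ FCyl X s m b = ∅ := by
        apply subset_antisymm _ (empty_subset _)
        intro ω hω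
        rw [← hST]
        exact ⟨hsub hω.1, hω.2⟩
      rw [hST, hET]
      simp
  · -- compl
    intro T hTm hT
    have hmT : MeasurableSet T := fut_le_ambient X hmeas s T hTm
    have hET : μ (E ∩ T) + μ (E ∩ Tᶜ) = μ E := by
      rw [← Set.diff_eq]; exact measure_inter_add_diff E hmT
    have hSbT : μ (Sb ∩ T) + μ (Sb ∩ Tᶜ) = μ Sb := by
      rw [← Set.diff_eq]; exact measure_inter_add_diff Sb hmT
    have h1 : μ (E ∩ Tᶜ) = μ E - μ (E ∩ T) :=
      ENNReal.eq_sub_of_add_eq (measure_ne_top μ _) (by rw [add_comm]; exact hET)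
    have h2 : μ (Sb ∩ Tᶜ) = μ Sb - μ (Sb ∩ T) :=
      ENNReal.eq_sub_of_add_eq (measure_ne_top μ _) (by rw [add_comm]; exact hSbT)
    rw [h1, h2, ENNReal.sub_mul (fun _ _ => measure_ne_top μ _),
      ENNReal.mul_sub (fun _ _ => measure_ne_top μ _), hT]
  · -- union
    intro f hdisj hfm hC
    have hmf : ∀ i, MeasurableSet (f i) := fun i => fut_le_ambient X hmeas s _ (hfm i)
    have h1 : μ (E ∩ ⋃ i, f i) = ∑' i, μ (E ∩ f i) := by
      rw [inter_iUnion]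
      exact measure_iUnion (fun i j hij => (hdisj hij).mono inter_subset_right
        inter_subset_right) fun i => hE.inter (hmf i)
    have h2 : μ (Sb ∩ ⋃ i, f i) = ∑' i, μ (Sb ∩ f i) := by
      rw [inter_iUnion]
      exact measure_iUnion (fun i j hij => (hdisj hij).mono inter_subset_right
        inter_subset_right) fun i => hmSb.inter (hmf i)
    rw [h1, h2, ← ENNReal.tsum_mul_right, ← ENNReal.tsum_mul_left]
    exact tsum_congr fun i => hC i

lemma final_algebra (π1 π0 mA mB mAB a1 a0 x1 x0 y1 y0 D0 g : ℝ)
    (hπ1pos : 0 < π1) (hπ0pos : 0 < π0) (hπsum : π0 = 1 - π1)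
    (hg0 : 0 ≤ g)
    (e1 : x1 * π1 = a1 * y1) (e0 : x0 * π0 = a0 * y0)
    (psplit : x1 + x0 = mAB) (asplit : a1 + a0 = mA) (bsplit : y1 + y0 = mB)
    (hmix : a1 - π1 * mA = g * D0)
    (hD0 : |D0| ≤ 1)
    (hy1 : 0 ≤ y1) (hy1' : y1 ≤ π1) (hy0 : 0 ≤ y0) (hy0' : y0 ≤ π0) :
    |mAB - mA * mB| ≤ g := by
  set r1 := y1 / π1 with hr1def
  set r0 := y0 / π0 with hr0def
  have hr1 : r1 ≤ 1 := by rw [hr1def, div_le_one hπ1pos]; exact hy1'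
  have hr1' : 0 ≤ r1 := div_nonneg hy1 hπ1pos.le
  have hr0 : r0 ≤ 1 := by rw [hr0def, div_le_one hπ0pos]; exact hy0'
  have hr0' : 0 ≤ r0 := div_nonneg hy0 hπ0pos.le
  have hy1e : y1 = π1 * r1 := by
    rw [hr1def, mul_comm π1 (y1 / π1), div_mul_cancel₀ _ hπ1pos.ne']
  have hy0e : y0 = π0 * r0 := by
    rw [hr0def, mul_comm π0 (y0 / π0), div_mul_cancel₀ _ hπ0pos.ne']
  have hx1e : x1 = a1 * r1 := by
    have hπ1ne : π1 ≠ 0 := hπ1pos.ne'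
    rw [hr1def, mul_div_assoc'] ; rw [eq_div_iff hπ1ne]; exact e1
  have hx0e : x0 = a0 * r0 := by
    have hπ0ne : π0 ≠ 0 := hπ0pos.ne'
    rw [hr0def, mul_div_assoc'] ; rw [eq_div_iff hπ0ne]; exact e0
  have hcov : mAB - mA * mB = (g * D0) * (r1 - r0) := by
    rw [← psplit, ← bsplit, hx1e, hx0e, hy1e, hy0e, ← hmix]
    have ha0e : a0 = mA - a1 := by linarith
    rw [ha0e, hπsum]; ring
  rw [hcov]
  calc |g * D0 * (r1 - r0)| = g * (|D0| * |r1 - r0|) := by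
        rw [abs_mul, abs_mul, abs_of_nonneg hg0, mul_assoc]
    _ ≤ g * 1 := by
        refine mul_le_mul_of_nonneg_left ?_ hg0
        have h1 : |r1 - r0| ≤ 1 := abs_le.mpr ⟨by linarith, by linarith⟩
        calc |D0| * |r1 - r0| ≤ 1 * 1 :=
              mul_le_mul hD0 h1 (abs_nonneg _) zero_le_one
          _ = 1 := one_mul 1
    _ = g := mul_one g


end Stmt19Aux

open Stmt19Aux in
theorem stmt19 (α β : ℝ) (hα : 0 < α) (hβ : 0 < β) (hαβ : α + β ≤ 1)
    {Ω : Type*} [MeasurableSpace Ω] (μ : Measure Ω) [IsProbabilityMeasure μ]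
    (X : ℕ → Ω → ℕ)
    (hmeas : ∀ t, Measurable (X t))
    (hval : ∀ t ω, X t ω ≤ 1)
    (hmarkov : ∀ (t : ℕ) (x : ℕ → ℕ),
      μ {ω | ∀ i ≤ t, X i ω = x i} ≠ 0 →
      ProbabilityTheory.cond μ {ω | ∀ i ≤ t, X i ω = x i} {ω | X (t + 1) ω = 1}
        = if x t = 1 then ENNReal.ofReal (1 - β) else ENNReal.ofReal α)
    (hinit : μ {ω | X 0 ω = 1} = ENNReal.ofReal (α / (α + β))) :
    ∀ τ : ℕ, 1 ≤ τ → ∀ (k : ℕ) (A B : Set Ω),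
      MeasurableSet[⨆ i : Fin (k + 1), MeasurableSpace.comap (X i.1) inferInstance] A →
      MeasurableSet[⨆ i : {i : ℕ // k + τ ≤ i}, MeasurableSpace.comap (X i.1) inferInstance] B →
      |(μ (A ∩ B)).toReal - (μ A).toReal * (μ B).toReal| ≤ (1 - α - β) ^ τ := by
  intro τ hτ k A B hA hB
  have hab : (0:ℝ) < α + β := by linarith
  obtain ⟨π1, hπ1def⟩ : ∃ x : ℝ, x = α / (α + β) := ⟨_, rfl⟩
  obtain ⟨π0, hπ0def⟩ : ∃ x : ℝ, x = β / (α + β) := ⟨_, rfl⟩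
  have hπ1pos : 0 < π1 := by rw [hπ1def]; exact div_pos hα hab
  have hπ0pos : 0 < π0 := by rw [hπ0def]; exact div_pos hβ hab
  have hπ1le : π1 ≤ 1 := by rw [hπ1def, div_le_one hab]; linarith
  have hπsum : π0 = 1 - π1 := by rw [hπ0def, hπ1def]; field_simp; ring
  have hγ0 : (0:ℝ) ≤ 1 - α - β := by linarith
  set s := k + τ with hs
  obtain ⟨hmA, hsatA⟩ := past_meas X hmeas k A hA
  have hmB : MeasurableSet B := fut_le_ambient X hmeas s B hB
  -- toReal facts
  have tr_le_one : ∀ S : Set Ω, (μ S).toReal ≤ 1 := fun S => by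
    have h := prob_le_one (μ := μ) (s := S)
    have := ENNReal.toReal_mono ENNReal.one_ne_top h
    simpa using this
  have tr_nonneg : ∀ S : Set Ω, 0 ≤ (μ S).toReal := fun S => ENNReal.toReal_nonneg
  have tr_mono : ∀ S T : Set Ω, S ⊆ T → (μ S).toReal ≤ (μ T).toReal := fun S T h =>
    ENNReal.toReal_mono (measure_ne_top μ _) (measure_mono h)
  -- stationarity
  have stat1 : ∀ t : ℕ, (μ {ω | X t ω = 1}).toReal = π1 := by
    intro t
    have hm := multi X hmeas hval α β μ hα hβ hαβ hmarkov 0 univ MeasurableSet.univ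
      (sat_univ X 0) t
    simp only [univ_inter, measure_univ, ENNReal.toReal_one, mul_one, zero_add] at hm
    have h0 : (μ {ω | X 0 ω = 1}).toReal = α / (α + β) := by
      rw [hinit, ENNReal.toReal_ofReal (le_of_lt (div_pos hα hab))]
    rw [h0, sub_self, mul_zero] at hm
    rw [hπ1def]
    linarith
  have stat0 : ∀ t : ℕ, (μ {ω | X t ω = 0}).toReal = π0 := by
    intro t
    have hsp := splitR X hmeas hval μ t univ MeasurableSet.univ
    simp only [univ_inter, measure_univ, ENNReal.toReal_one] at hsp
    rw [stat1 t] at hsp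
    rw [hπsum]; linarith
  -- notation
  set S1 := {ω | X s ω = 1} with hS1
  set S0 := {ω | X s ω = 0} with hS0
  have hmS1 : MeasurableSet S1 := meas_eq X hmeas s 1
  have hmS0 : MeasurableSet S0 := meas_eq X hmeas s 0
  have hsatA' : Sat X s A := sat_mono X (by omega) hsatA
  -- conditional independence, b = 1 and b = 0
  have hci1 := ci X hmeas hval α β μ hα hβ hαβ hmarkov s 1 le_rfl (A ∩ S1)
    (hmA.inter hmS1) (sat_inter X hsatA' (sat_eq X le_rfl 1)) inter_subset_right B hB
  have hci0 := ci X hmeas hval α β μ hα hβ hαβ hmarkov s 0 (by omega) (A ∩ S0)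
    (hmA.inter hmS0) (sat_inter X hsatA' (sat_eq X le_rfl 0)) inter_subset_right B hB
  have statR1 : (μ S1).toReal = π1 := by rw [hS1]; exact stat1 s
  have statR0 : (μ S0).toReal = π0 := by rw [hS0]; exact stat0 s
  -- real versions of CI
  have e1 : (μ (A ∩ S1 ∩ B)).toReal * π1 = (μ (A ∩ S1)).toReal * (μ (S1 ∩ B)).toReal := by
    have h := congrArg ENNReal.toReal hci1
    rw [ENNReal.toReal_mul, ENNReal.toReal_mul] at h
    rw [← hS1] at h
    rw [← statR1]
    exact h
  have e0 : (μ (A ∩ S0 ∩ B)).toReal * π0 = (μ (A ∩ S0)).toReal * (μ (S0 ∩ B)).toReal := by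
    have h := congrArg ENNReal.toReal hci0
    rw [ENNReal.toReal_mul, ENNReal.toReal_mul] at h
    rw [← hS0] at h
    rw [← statR0]
    exact h
  -- splittings
  have psplit : (μ (A ∩ S1 ∩ B)).toReal + (μ (A ∩ S0 ∩ B)).toReal = (μ (A ∩ B)).toReal := by
    have h := splitR X hmeas hval μ s (A ∩ B) (hmA.inter hmB)
    rw [← hS1, ← hS0] at h
    rw [show A ∩ S1 ∩ B = A ∩ B ∩ S1 from by rw [inter_right_comm],
        show A ∩ S0 ∩ B = A ∩ B ∩ S0 from by rw [inter_right_comm]]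
    exact h
  have asplit : (μ (A ∩ S1)).toReal + (μ (A ∩ S0)).toReal = (μ A).toReal := by
    have h := splitR X hmeas hval μ s A hmA
    rw [← hS1, ← hS0] at h
    exact h
  have bsplit : (μ (S1 ∩ B)).toReal + (μ (S0 ∩ B)).toReal = (μ B).toReal := by
    have h := splitR X hmeas hval μ s B hmB
    rw [← hS1, ← hS0] at h
    rw [inter_comm S1 B, inter_comm S0 B]
    exact h
  -- mixing
  have hmix : (μ (A ∩ S1)).toReal - π1 * (μ A).toReal
      = (1 - α - β) ^ τ
        * ((μ (A ∩ {ω | X k ω = 1})).toReal - π1 * (μ A).toReal) := by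
    have h := multi X hmeas hval α β μ hα hβ hαβ hmarkov k A hmA hsatA τ
    rw [← hs, ← hS1] at h
    rw [hπ1def]
    exact h
  have hD0 : |(μ (A ∩ {ω | X k ω = 1})).toReal - π1 * (μ A).toReal| ≤ 1 := by
    have h1 := tr_nonneg (A ∩ {ω | X k ω = 1})
    have h2 := tr_le_one (A ∩ {ω | X k ω = 1})
    have h3 := tr_nonneg A
    have h4 := tr_le_one A
    have h5 : 0 ≤ π1 * (μ A).toReal := mul_nonneg hπ1pos.le h3
    have h6 : π1 * (μ A).toReal ≤ 1 := by nlinarith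
    rw [abs_le]; constructor <;> nlinarith
  exact final_algebra π1 π0 (μ A).toReal (μ B).toReal (μ (A ∩ B)).toReal
    (μ (A ∩ S1)).toReal (μ (A ∩ S0)).toReal
    (μ (A ∩ S1 ∩ B)).toReal (μ (A ∩ S0 ∩ B)).toReal
    (μ (S1 ∩ B)).toReal (μ (S0 ∩ B)).toReal
    ((μ (A ∩ {ω | X k ω = 1})).toReal - π1 * (μ A).toReal) ((1 - α - β) ^ τ)
    hπ1pos hπ0pos hπsum (pow_nonneg hγ0 τ) e1 e0 psplit asplit bsplit hmix hD0
    (tr_nonneg _) (by rw [← statR1]; exact tr_mono _ _ inter_subset_left)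
    (tr_nonneg _) (by rw [← statR0]; exact tr_mono _ _ inter_subset_left)
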